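/- arXiv:2103.13878 — 4 statements merged into one kernel-verified Lean document; each statement's English description precedes it below -/
import Mathlib

section
/- Let E = EuclideanSpace ℝ (Fin 3) and x ∈ E. Let n : E → E be differentiable at x with ‖n y‖ = 1 for all y in a neighborhood of x and with fderiv ℝ n x (n x) = 0. Let v : E → E be differentiable at x and suppose ⟪v y, n y⟫ = 0 for all y in a neighborhood of x. Then ⟪fderiv ℝ v x (n x), n x⟫ = 0; consequently the surface divergence of v at x equals its ordinary divergence: (trace of fderiv ℝ v x) - ⟪fderiv ℝ v x (n x), n x⟫ = trace of fderiv ℝ v x. -/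
open Filter

/-- For a vector field `v` tangent to a surface and to all nearby displaced surfaces,
the surface divergence equals the ordinary divergence. -/
theorem surface_div_eq_div
    (x : EuclideanSpace ℝ (Fin 3))
    (n : EuclideanSpace ℝ (Fin 3) → EuclideanSpace ℝ (Fin 3))
    (hn_diff : DifferentiableAt ℝ n x)
    (hn_norm : ∀ᶠ y in nhds x, ‖n y‖ = 1)
    (hnn : fderiv ℝ n x (n x) = 0)
    (v : EuclideanSpace ℝ (Fin 3) → EuclideanSpace ℝ (Fin 3))
    (hv : DifferentiableAt ℝ v x)
    (hperp : ∀ᶠ y in nhds x, (inner ℝ (v y) (n y) : ℝ) = 0) :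
    (inner ℝ (fderiv ℝ v x (n x)) (n x) : ℝ) = 0 ∧
    LinearMap.trace ℝ (EuclideanSpace ℝ (Fin 3)) (fderiv ℝ v x).toLinearMap
        - (inner ℝ (fderiv ℝ v x (n x)) (n x) : ℝ)
      = LinearMap.trace ℝ (EuclideanSpace ℝ (Fin 3)) (fderiv ℝ v x).toLinearMap := by
  have hzero : fderiv ℝ (fun y => (inner ℝ (v y) (n y) : ℝ)) x = 0 := by
    have h : (fun y => (inner ℝ (v y) (n y) : ℝ)) =ᶠ[nhds x] (fun _ => (0 : ℝ)) := hperp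
    rw [h.fderiv_eq, fderiv_fun_const]; rfl
  have key : (inner ℝ (fderiv ℝ v x (n x)) (n x) : ℝ) = 0 := by
    have h := fderiv_inner_apply ℝ hv hn_diff (n x)
    rw [hzero, hnn] at h
    simpa using h.symm
  exact ⟨key, by rw [key, sub_zero]⟩
end

section
/- Let E = EuclideanSpace ℝ (Fin 3) and x ∈ E. Let u : E → ℝ be twice continuously differentiable on a neighborhood of x, and let n : E → E be differentiable at x with ‖n y‖ = 1 for all y in a neighborhood of x. Set ψ(y) := ⟪n y, ∇u(y)⟫ and define the surface Laplacian of u at x by Δ_Γu(x) := trace(fderiv ℝ (fun y => ∇u(y) - ψ(y) • n y) x) - ⟪fderiv ℝ (fun y => ∇u(y) - ψ(y) • n y) x (n x), n x⟫. Then Δ_Γu(x) = Δu(x) - ⟪(fderiv ℝ (fun y => ∇u y) x) (n x), n x⟫ - ψ(x) · trace(fderiv ℝ n x), where Δu(x) := trace(fderiv ℝ (fun y => ∇u y) x) is the ordinary Laplacian. -/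
open Filter

noncomputable abbrev E3 := EuclideanSpace ℝ (Fin 3)

lemma trace_smulRight' (f : E3 →L[ℝ] ℝ) (c : E3) :
    LinearMap.trace ℝ E3 (f.smulRight c).toLinearMap = f c := by
  classical
  set b := (EuclideanSpace.basisFun (Fin 3) ℝ).toBasis
  rw [LinearMap.trace_eq_matrix_trace ℝ b]
  rw [Matrix.trace]
  have : ∀ i, (LinearMap.toMatrix b b (f.smulRight c).toLinearMap).diag i
      = f (b i) * b.repr c i := by
    intro i
    simp [Matrix.diag, LinearMap.toMatrix_apply, map_smul]
  rw [Finset.sum_congr rfl fun i _ => this i]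
  have := b.sum_repr c
  calc ∑ i, f (b i) * b.repr c i = f (∑ i, b.repr c i • b i) := by
        rw [map_sum]
        exact Finset.sum_congr rfl fun i _ => by rw [map_smul, smul_eq_mul, mul_comm]
      _ = f c := by rw [b.sum_repr c]

lemma grad_diff (x : E3) (u : E3 → ℝ) (hu : ContDiffAt ℝ 2 u x) :
    DifferentiableAt ℝ (fun y => gradient u y) x := by
  have h1 : ContDiffAt ℝ 1 (fderiv ℝ u) x := hu.fderiv_right (by norm_num)
  have : DifferentiableAt ℝ (fderiv ℝ u) x := h1.differentiableAt (by norm_num)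
  exact ((InnerProductSpace.toDual ℝ E3).symm.differentiableAt.comp x this :)

/-- Key identity in the proof of Theorem 2.1:
`Δ_Γu = Δū - nᵀ∇²ū n + 2H⟪n, ∇ū⟫` (with `∇·n = -2H`). -/
theorem surface_laplacian_identity
    (x : EuclideanSpace ℝ (Fin 3))
    (u : EuclideanSpace ℝ (Fin 3) → ℝ)
    (hu : ContDiffAt ℝ 2 u x)
    (n : EuclideanSpace ℝ (Fin 3) → EuclideanSpace ℝ (Fin 3))
    (hn_diff : DifferentiableAt ℝ n x)
    (hn_norm : ∀ᶠ y in nhds x, ‖n y‖ = 1) :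
    LinearMap.trace ℝ (EuclideanSpace ℝ (Fin 3))
        (fderiv ℝ (fun y => gradient u y - (inner ℝ (n y) (gradient u y) : ℝ) • n y) x).toLinearMap
      - (inner ℝ (fderiv ℝ (fun y => gradient u y - (inner ℝ (n y) (gradient u y) : ℝ) • n y) x (n x))
          (n x) : ℝ)
    = LinearMap.trace ℝ (EuclideanSpace ℝ (Fin 3))
        (fderiv ℝ (fun y => gradient u y) x).toLinearMap
      - (inner ℝ (fderiv ℝ (fun y => gradient u y) x (n x)) (n x) : ℝ)
      - (inner ℝ (n x) (gradient u x) : ℝ)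
          * LinearMap.trace ℝ (EuclideanSpace ℝ (Fin 3)) (fderiv ℝ n x).toLinearMap := by
  have hg : DifferentiableAt ℝ (fun y => gradient u y) x := grad_diff x u hu
  have hψ : DifferentiableAt ℝ (fun y => (inner ℝ (n y) (gradient u y) : ℝ)) x :=
    hn_diff.inner ℝ hg
  have hsn : DifferentiableAt ℝ (fun y => (inner ℝ (n y) (gradient u y) : ℝ) • n y) x :=
    hψ.smul hn_diff
  set A := fderiv ℝ (fun y => gradient u y) x with hA
  set B := fderiv ℝ n x with hB
  set F := fderiv ℝ (fun y => (inner ℝ (n y) (gradient u y) : ℝ)) x with hF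
  set c : ℝ := inner ℝ (n x) (gradient u x) with hc
  -- norm facts
  have hnx : (inner ℝ (n x) (n x) : ℝ) = 1 := by
    have h1 : ‖n x‖ = 1 := hn_norm.self_of_nhds
    rw [real_inner_self_eq_norm_mul_norm, h1]; norm_num
  have horth : (inner ℝ (B (n x)) (n x) : ℝ) = 0 := by
    have hev : (fun y => (inner ℝ (n y) (n y) : ℝ)) =ᶠ[nhds x] (fun _ => (1:ℝ)) := by
      filter_upwards [hn_norm] with y hy
      rw [real_inner_self_eq_norm_mul_norm, hy]; norm_num
    have h0 : fderiv ℝ (fun y => (inner ℝ (n y) (n y) : ℝ)) x = 0 := by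
      rw [hev.fderiv_eq]; exact fderiv_const_apply 1
    have := fderiv_inner_apply (𝕜 := ℝ) hn_diff hn_diff (n x)
    rw [h0] at this
    simp only [ContinuousLinearMap.zero_apply, ← hB] at this
    linarith [real_inner_comm (n x) (B (n x))]
  -- the derivative of the tangential gradient
  have hD : fderiv ℝ (fun y => gradient u y - (inner ℝ (n y) (gradient u y) : ℝ) • n y) x
      = A - (c • B + F.smulRight (n x)) := by
    rw [fderiv_fun_sub hg hsn, fderiv_fun_smul hψ hn_diff]
  rw [hD]
  -- trace computation
  have htr : LinearMap.trace ℝ (EuclideanSpace ℝ (Fin 3))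
      (A - (c • B + F.smulRight (n x))).toLinearMap
      = LinearMap.trace ℝ (EuclideanSpace ℝ (Fin 3)) A.toLinearMap
        - (c * LinearMap.trace ℝ (EuclideanSpace ℝ (Fin 3)) B.toLinearMap + F (n x)) := by
    have : (A - (c • B + F.smulRight (n x))).toLinearMap
        = A.toLinearMap - (c • B.toLinearMap + (F.smulRight (n x)).toLinearMap) := by
      rfl
    rw [this, map_sub, map_add, map_smul, trace_smulRight', smul_eq_mul]
  -- inner product computation
  have hin : (inner ℝ ((A - (c • B + F.smulRight (n x))) (n x)) (n x) : ℝ)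
      = (inner ℝ (A (n x)) (n x) : ℝ) - F (n x) := by
    simp only [ContinuousLinearMap.sub_apply, ContinuousLinearMap.add_apply,
      ContinuousLinearMap.smul_apply, ContinuousLinearMap.smulRight_apply]
    rw [inner_sub_left, inner_add_left, real_inner_smul_left, real_inner_smul_left,
      horth, hnx]
    ring
  rw [htr, hin]
  ring
end

section
/- Let E = EuclideanSpace ℝ (Fin 3) and x ∈ E. Let u : E → ℝ be twice continuously differentiable on a neighborhood of x, let n : E → E be differentiable at x with ‖n y‖ = 1 for all y in a neighborhood of x, and let g ∈ ℝ. Set ψ(y) := ⟪n y, ∇u(y)⟫ and Δ_Γu(x) := trace(fderiv ℝ (fun y => ∇u(y) - ψ(y) • n y) x) - ⟪fderiv ℝ (fun y => ∇u(y) - ψ(y) • n y) x (n x), n x⟫. Then |Δ_Γu(x) - g| ≤ max 1 |trace(fderiv ℝ n x)| * ( |Δu(x) - g| + |⟪n x, ∇u(x)⟫| + |⟪(fderiv ℝ (fun y => ∇u y) x)(n x), n x⟫| ), where Δu(x) := trace(fderiv ℝ (fun y => ∇u y) x). -/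
open Filter

local notation "E" => EuclideanSpace ℝ (Fin 3)

open TensorProduct in
lemma trace_smulRight_aux (f : E →L[ℝ] ℝ) (v : E) :
    LinearMap.trace ℝ E (f.smulRight v).toLinearMap = f v := by
  have h : (f.smulRight v).toLinearMap = dualTensorHom ℝ E E ((f : E →ₗ[ℝ] ℝ) ⊗ₜ[ℝ] v) := by
    ext m
    simp [dualTensorHom_apply]
  rw [h, LinearMap.trace_eq_contract_apply, contractLeft_apply]
  rfl

/-- Pointwise form of estimate (3) of Theorem 2.1:
`|Δ_Γu - g| ≤ C(|Δū - g| + |⟪n, ∇ū⟫| + |nᵀ∇²ū n|)` with `C = max 1 |∇·n| = max(1, 2|H|)`. -/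
theorem surface_laplacian_estimate_pointwise
    (x : EuclideanSpace ℝ (Fin 3))
    (u : EuclideanSpace ℝ (Fin 3) → ℝ)
    (hu : ContDiffAt ℝ 2 u x)
    (n : EuclideanSpace ℝ (Fin 3) → EuclideanSpace ℝ (Fin 3))
    (hn_diff : DifferentiableAt ℝ n x)
    (hn_norm : ∀ᶠ y in nhds x, ‖n y‖ = 1)
    (g : ℝ) :
    |LinearMap.trace ℝ (EuclideanSpace ℝ (Fin 3))
        (fderiv ℝ (fun y => gradient u y - (inner ℝ (n y) (gradient u y) : ℝ) • n y) x).toLinearMap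
      - (inner ℝ (fderiv ℝ (fun y => gradient u y - (inner ℝ (n y) (gradient u y) : ℝ) • n y) x (n x))
          (n x) : ℝ)
      - g| ≤
    max 1 |LinearMap.trace ℝ (EuclideanSpace ℝ (Fin 3)) (fderiv ℝ n x).toLinearMap| *
      (|LinearMap.trace ℝ (EuclideanSpace ℝ (Fin 3))
          (fderiv ℝ (fun y => gradient u y) x).toLinearMap - g|
        + |(inner ℝ (n x) (gradient u x) : ℝ)|
        + |(inner ℝ (fderiv ℝ (fun y => gradient u y) x (n x)) (n x) : ℝ)|) := by
  -- differentiability of the gradient field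
  have hfd : ContDiffAt ℝ 1 (fderiv ℝ u) x := hu.fderiv_right (m := 1) le_rfl
  have hw : DifferentiableAt ℝ (fun y => gradient u y) x := by
    have : (fun y => gradient u y)
        = fun y => (InnerProductSpace.toDual ℝ E).symm (fderiv ℝ u y) := rfl
    rw [this]
    exact (InnerProductSpace.toDual ℝ E).symm.toContinuousLinearEquiv.differentiableAt.comp x
      (hfd.differentiableAt one_ne_zero)
  set ψ : E → ℝ := fun y => (inner ℝ (n y) (gradient u y) : ℝ) with hψdef
  have hψ : DifferentiableAt ℝ ψ x := hn_diff.inner ℝ hw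
  set Dw := fderiv ℝ (fun y => gradient u y) x with hDw
  set Dn := fderiv ℝ n x with hDn
  set dψ := fderiv ℝ ψ x with hdψ
  -- the derivative of the tangential gradient field
  have hD : fderiv ℝ (fun y => gradient u y - ψ y • n y) x
      = Dw - (ψ x • Dn + dψ.smulRight (n x)) := by
    rw [fderiv_fun_sub (g := fun y => ψ y • n y) hw (hψ.smul hn_diff), fderiv_fun_smul hψ hn_diff]
  -- ⟪Dn h, n x⟫ = 0
  have hnn : (fun y => (inner ℝ (n y) (n y) : ℝ)) =ᶠ[nhds x] fun _ => (1:ℝ) := by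
    filter_upwards [hn_norm] with y hy
    rw [real_inner_self_eq_norm_sq, hy]; norm_num
  have hDnperp : ∀ h : E, (inner ℝ (Dn h) (n x) : ℝ) = 0 := by
    intro h
    have h1 : fderiv ℝ (fun y => (inner ℝ (n y) (n y) : ℝ)) x = 0 := by
      rw [hnn.fderiv_eq]; exact fderiv_const_apply 1
    have h2 := fderiv_inner_apply ℝ hn_diff hn_diff h
    rw [h1] at h2
    simp only [ContinuousLinearMap.zero_apply] at h2
    have h3 : (inner ℝ (n x) (Dn h) : ℝ) = (inner ℝ (Dn h) (n x) : ℝ) := real_inner_comm _ _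
    rw [h3] at h2
    linarith
  have hn1 : (inner ℝ (n x) (n x) : ℝ) = 1 := by
    rw [real_inner_self_eq_norm_sq, hn_norm.self_of_nhds]; norm_num
  -- trace computation
  have htr : LinearMap.trace ℝ E
      (fderiv ℝ (fun y => gradient u y - ψ y • n y) x).toLinearMap
      = LinearMap.trace ℝ E Dw.toLinearMap - ψ x * LinearMap.trace ℝ E Dn.toLinearMap
        - dψ (n x) := by
    rw [hD]
    have : ((Dw - (ψ x • Dn + dψ.smulRight (n x))) : E →L[ℝ] E).toLinearMap
        = Dw.toLinearMap - (ψ x • Dn.toLinearMap + (dψ.smulRight (n x)).toLinearMap) := by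
      ext m; simp
    rw [this]
    simp [trace_smulRight_aux, smul_eq_mul]
    ring
  -- inner product computation
  have hip : (inner ℝ ((fderiv ℝ (fun y => gradient u y - ψ y • n y) x) (n x)) (n x) : ℝ)
      = (inner ℝ (Dw (n x)) (n x) : ℝ) - dψ (n x) := by
    rw [hD]
    simp only [ContinuousLinearMap.coe_sub', Pi.sub_apply, ContinuousLinearMap.add_apply,
      ContinuousLinearMap.coe_smul', Pi.smul_apply, ContinuousLinearMap.smulRight_apply]
    rw [inner_sub_left, inner_add_left, real_inner_smul_left, real_inner_smul_left,
      hDnperp (n x), hn1]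
    ring
  rw [htr, hip]
  -- now a pure real-arithmetic estimate
  set A := LinearMap.trace ℝ E Dw.toLinearMap - g
  set B := (inner ℝ (Dw (n x)) (n x) : ℝ)
  set C := ψ x
  set T := LinearMap.trace ℝ E Dn.toLinearMap
  have key : LinearMap.trace ℝ E Dw.toLinearMap - C * T - dψ (n x)
      - (B - dψ (n x)) - g = A - B - C * T := by ring
  rw [key]
  have hM1 : (1:ℝ) ≤ max 1 |T| := le_max_left _ _
  have hMT : |T| ≤ max 1 |T| := le_max_right _ _
  have h1 : |A - B - C * T| ≤ |A| + |B| + |C| * |T| := by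
    calc |A - B - C * T| ≤ |A - B| + |C * T| := abs_sub _ _
      _ ≤ |A| + |B| + |C| * |T| := by rw [abs_mul]; exact add_le_add (abs_sub _ _) le_rfl
  have hC : (inner ℝ (n x) (gradient u x) : ℝ) = C := rfl
  rw [hC]
  nlinarith [abs_nonneg A, abs_nonneg B, abs_nonneg C, abs_nonneg T,
    mul_le_mul_of_nonneg_left hMT (abs_nonneg C)]
end

section
/- Let E = EuclideanSpace ℝ (Fin 3) and x ∈ E. Let u : E → ℝ be twice continuously differentiable on a neighborhood of x, and let n : E → E be differentiable at x with ‖n y‖ = 1 for all y in a neighborhood of x and with fderiv ℝ n x (n x) = 0. Suppose u is extended constant along n, i.e. ⟪∇u(y), n(y)⟫ = 0 for all y in a neighborhood of x. Then the surface Laplacian equals the ordinary Laplacian at x: trace(fderiv ℝ (fun y => ∇u(y) - ⟪n y, ∇u(y)⟫ • n y) x) - ⟪fderiv ℝ (fun y => ∇u(y) - ⟪n y, ∇u(y)⟫ • n y) x (n x), n x⟫ = trace(fderiv ℝ (fun y => ∇u y) x). -/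
open Filter

/-- Section 2.2 of the paper: under the constraint `⟪∇u, n⟫ = 0` near `x`
(`u` extended constantly along the normal), the surface Laplacian equals
the ordinary Laplacian: `Δ_Γu = Δu`. -/
theorem surface_laplacian_eq_laplacian
    (x : EuclideanSpace ℝ (Fin 3))
    (u : EuclideanSpace ℝ (Fin 3) → ℝ)
    (hu : ContDiffAt ℝ 2 u x)
    (n : EuclideanSpace ℝ (Fin 3) → EuclideanSpace ℝ (Fin 3))
    (hn_diff : DifferentiableAt ℝ n x)
    (hn_norm : ∀ᶠ y in nhds x, ‖n y‖ = 1)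
    (hnn : fderiv ℝ n x (n x) = 0)
    (hconst : ∀ᶠ y in nhds x, (inner ℝ (gradient u y) (n y) : ℝ) = 0) :
    LinearMap.trace ℝ (EuclideanSpace ℝ (Fin 3))
        (fderiv ℝ (fun y => gradient u y - (inner ℝ (n y) (gradient u y) : ℝ) • n y) x).toLinearMap
      - (inner ℝ (fderiv ℝ (fun y => gradient u y - (inner ℝ (n y) (gradient u y) : ℝ) • n y) x (n x))
          (n x) : ℝ)
    = LinearMap.trace ℝ (EuclideanSpace ℝ (Fin 3))
        (fderiv ℝ (fun y => gradient u y) x).toLinearMap := by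
  -- The tangential gradient coincides with the gradient near x.
  have heq : (fun y => gradient u y - (inner ℝ (n y) (gradient u y) : ℝ) • n y)
      =ᶠ[nhds x] fun y => gradient u y := by
    filter_upwards [hconst] with y hy
    rw [real_inner_comm, hy, zero_smul, sub_zero]
  have hfd : fderiv ℝ (fun y => gradient u y - (inner ℝ (n y) (gradient u y) : ℝ) • n y) x
      = fderiv ℝ (fun y => gradient u y) x := heq.fderiv_eq
  -- Differentiability of the gradient.
  have hgrad : DifferentiableAt ℝ (fun y => gradient u y) x := by
    have h1 : ContDiffAt ℝ 1 (fderiv ℝ u) x := hu.fderiv_right (by norm_num)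
    have : DifferentiableAt ℝ (fderiv ℝ u) x := h1.differentiableAt one_ne_zero
    have := ((InnerProductSpace.toDual ℝ
      (EuclideanSpace ℝ (Fin 3))).symm.differentiable.differentiableAt).comp x this
    exact this
  -- the normal-normal second derivative term vanishes
  have hkey : (inner ℝ (fderiv ℝ (fun y => gradient u y) x (n x)) (n x) : ℝ) = 0 := by
    have hz : fderiv ℝ (fun y => (inner ℝ (gradient u y) (n y) : ℝ)) x
        = fderiv ℝ (fun _ : EuclideanSpace ℝ (Fin 3) => (0 : ℝ)) x :=
      Filter.EventuallyEq.fderiv_eq hconst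
    have happ := congrArg (fun L => L (n x)) hz
    simp only [fderiv_fun_const, Pi.zero_apply, ContinuousLinearMap.zero_apply] at happ
    rw [fderiv_inner_apply ℝ hgrad hn_diff (n x)] at happ
    rw [hnn] at happ
    simpa using happ
  rw [hfd, hkey, sub_zero]
end
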